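/- arXiv:1407.4784 — 4 statements merged into one kernel-verified Lean document; each statement's English description precedes it below -/
import Mathlib

section
/- Let n ≥ 1 and k = 2n − 1. For any family of sets S_{ij} ⊆ ℕ with |S_{ij}| = k (i = 1,…,k, j ∈ ℕ), there exist a_{ij} ∈ S_{ij} satisfying conditions (2a), (2b), and (3) of the grid-filling problem. -/
open Fin.NatCast

noncomputable def gfPick (s : Finset ℕ) : ℕ := if h : s.Nonempty then s.min' h else 0

lemma gfPick_mem {s : Finset ℕ} (h : s.Nonempty) : gfPick s ∈ s := by
  rw [gfPick, dif_pos h]; exact s.min'_mem h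

noncomputable def gfRow (S : ℕ → Finset ℕ) (av : Finset ℕ) (b0 n : ℕ) : ℕ → ℕ
  | 0 => 0
  | 1 => b0
  | (j+2) => gfPick ((S (j+2)) \
      (((Finset.Icc 1 (min (j+1) (n-1))).attach.image
        (fun m => gfRow S av b0 n m.1)) ∪ av))
termination_by j => j
decreasing_by
  have h := m.2
  simp only [Finset.mem_Icc] at h
  omega

lemma gfRow_spec (S : ℕ → Finset ℕ) (av : Finset ℕ) (b0 n : ℕ) (hn : 1 ≤ n)
    (j : ℕ) (hj : 2 ≤ j) (hcard : (S j).card = 2*n-1) (hav : av.card ≤ n-1) :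
    gfRow S av b0 n j ∈ (S j) \
      (((Finset.Icc 1 (min (j-1) (n-1))).attach.image
        (fun m => gfRow S av b0 n m.1)) ∪ av) := by
  obtain ⟨m, rfl⟩ : ∃ m, j = m + 2 := ⟨j - 2, by omega⟩
  have h1 : m + 2 - 1 = m + 1 := rfl
  rw [h1, gfRow]
  apply gfPick_mem
  have hX : (((Finset.Icc 1 (min (m+1) (n-1))).attach.image
        (fun x => gfRow S av b0 n x.1)) ∪ av).card ≤ 2*n-2 := by
    calc _ ≤ (((Finset.Icc 1 (min (m+1) (n-1))).attach.image
        (fun x => gfRow S av b0 n x.1))).card + av.card := Finset.card_union_le _ _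
    _ ≤ (Finset.Icc 1 (min (m+1) (n-1))).attach.card + av.card := by
        gcongr; exact Finset.card_image_le
    _ ≤ (n-1) + (n-1) := by
        simp [Nat.card_Icc]; omega
    _ ≤ 2*n-2 := by omega
  have := Finset.le_card_sdiff (((Finset.Icc 1 (min (m+1) (n-1))).attach.image
        (fun x => gfRow S av b0 n x.1)) ∪ av) (S (m+2))
  rw [← Finset.card_pos]
  omega

/-- For n ≥ 1 and k = 2n − 1, the grid-filling problem has a general solution. -/
theorem stmt2 (n : ℕ) (hn : 1 ≤ n)
    (S : Fin (2 * n - 1) → ℕ → Finset ℕ)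
    (hS : ∀ i, ∀ j : ℕ, 1 ≤ j → (S i j).card = 2 * n - 1) :
    ∃ a : Fin (2 * n - 1) → ℕ → ℕ,
      (∀ i, ∀ j : ℕ, 1 ≤ j → a i j ∈ S i j) ∧
      (∀ i, ∀ j₁ j₂ : ℕ, 1 ≤ j₁ → j₁ < j₂ → j₂ ≤ n → a i j₁ ≠ a i j₂) ∧
      (∀ i, ∀ j : ℕ, n ≤ j → ∀ j' : ℕ, 1 ≤ j' → j' ≤ n - 1 → a i j ≠ a i j') ∧
      (∀ r₁ r₂, r₁ ≠ r₂ → ∀ j : ℕ, 1 ≤ j →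
        (Finset.Icc 1 j).image (a r₁) ≠ (Finset.Icc 1 j).image (a r₂)) := by
  haveI : NeZero (2 * n - 1) := ⟨by omega⟩
  -- tokens: an SDR for the first column
  obtain ⟨b, hbinj, hbmem⟩ : ∃ b : Fin (2*n-1) → ℕ,
      Function.Injective b ∧ ∀ r, b r ∈ S r 1 := by
    rw [← Finset.all_card_le_biUnion_card_iff_exists_injective]
    intro s
    rcases s.eq_empty_or_nonempty with rfl | ⟨i, hi⟩
    · simp
    · have h1 : s.card ≤ 2*n-1 := by
        have := Finset.card_le_univ s
        simpa using this
      have h2 : (S i 1) ⊆ s.biUnion (fun r => S r 1) :=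
        Finset.subset_biUnion_of_mem (fun r => S r 1) hi
      have h3 := Finset.card_le_card h2
      rw [hS i 1 le_rfl] at h3
      omega
  -- the avoided token set of each row
  set av : Fin (2*n-1) → Finset ℕ :=
    fun r => (Finset.Icc 1 (n-1)).image (fun d : ℕ => b (r - (d : Fin (2*n-1)))) with hav_def
  have hav_card : ∀ r, (av r).card ≤ n-1 := by
    intro r
    calc (av r).card ≤ (Finset.Icc 1 (n-1)).card := Finset.card_image_le
    _ ≤ n-1 := by simp [Nat.card_Icc]
  -- the grid
  set a : Fin (2*n-1) → ℕ → ℕ := fun r => gfRow (S r) (av r) (b r) n with ha_def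
  have ha1 : ∀ r, a r 1 = b r := by
    intro r
    show gfRow (S r) (av r) (b r) n 1 = b r
    rw [gfRow]
  have hspec : ∀ r (j : ℕ), 2 ≤ j → a r j ∈ S r j ∧ a r j ∉ av r ∧
      (∀ m, 1 ≤ m → m ≤ min (j-1) (n-1) → a r j ≠ a r m) := by
    intro r j hj
    have h := gfRow_spec (S r) (av r) (b r) n hn j hj (hS r j (by omega)) (hav_card r)
    rw [Finset.mem_sdiff, Finset.mem_union] at h
    push_neg at h
    obtain ⟨h1, h2, h3⟩ := h
    refine ⟨h1, h3, ?_⟩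
    intro m hm1 hm2 heq
    apply h2
    rw [Finset.mem_image]
    exact ⟨⟨m, by rw [Finset.mem_Icc]; omega⟩, Finset.mem_attach _ _, heq.symm⟩
  have hb_not_av : ∀ r, b r ∉ av r := by
    intro r hr
    rw [hav_def] at hr
    simp only [Finset.mem_image, Finset.mem_Icc] at hr
    obtain ⟨d, ⟨hd1, hd2⟩, heq⟩ := hr
    have h0 : r - (d : Fin (2*n-1)) = r := hbinj heq
    have h1 : (d : Fin (2*n-1)) = 0 := by
      have := sub_eq_self.mp h0
      exact this
    have h2 : ((d : ℕ) : Fin (2*n-1)).val = d := Fin.val_cast_of_lt (by omega)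
    rw [h1] at h2
    simp at h2
    omega
  have h_not_av : ∀ r (j : ℕ), 1 ≤ j → a r j ∉ av r := by
    intro r j hj
    rcases Nat.lt_or_ge j 2 with h | h
    · have : j = 1 := by omega
      rw [this, ha1]; exact hb_not_av r
    · exact (hspec r j h).2.1
  -- key separation lemma
  have key : ∀ r₁ r₂ : Fin (2*n-1), (r₂ - r₁).val ∈ Finset.Icc 1 (n-1) →
      ∀ j : ℕ, 1 ≤ j →
      (Finset.Icc 1 j).image (a r₁) ≠ (Finset.Icc 1 j).image (a r₂) := by
    intro r₁ r₂ hmem j hj heq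
    have hb1 : b r₁ ∈ av r₂ := by
      rw [hav_def]
      rw [Finset.mem_image]
      refine ⟨(r₂ - r₁).val, hmem, ?_⟩
      rw [Fin.cast_val_eq_self, sub_sub_cancel]
    have hin : b r₁ ∈ (Finset.Icc 1 j).image (a r₁) := by
      rw [Finset.mem_image]
      exact ⟨1, by rw [Finset.mem_Icc]; omega, ha1 r₁⟩
    rw [heq] at hin
    rw [Finset.mem_image] at hin
    obtain ⟨j', hj', hjeq⟩ := hin
    rw [Finset.mem_Icc] at hj'
    exact h_not_av r₂ j' hj'.1 (hjeq ▸ hb1)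
  refine ⟨a, ?_, ?_, ?_, ?_⟩
  · -- membership
    intro i j hj
    rcases Nat.lt_or_ge j 2 with h | h
    · have : j = 1 := by omega
      rw [this, ha1]; exact hbmem i
    · exact (hspec i j h).1
  · -- (2a)
    intro i j₁ j₂ h1 h2 h3
    have := (hspec i j₂ (by omega)).2.2 j₁ h1 (by omega)
    exact fun heq => this heq.symm
  · -- (2b)
    intro i j hjn j' h1 h2
    rcases Nat.lt_or_ge n 2 with hsmall | hbig
    · omega
    · exact (hspec i j (by omega)).2.2 j' h1 (by omega)
  · -- (3)
    intro r₁ r₂ hne j hj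
    have hsub_ne : r₂ - r₁ ≠ 0 := sub_ne_zero.mpr (Ne.symm hne)
    have hsub_ne' : r₁ - r₂ ≠ 0 := sub_ne_zero.mpr hne
    have ht1 : (r₂ - r₁).val ≠ 0 := by
      intro h
      exact hsub_ne (Fin.ext (by simp [h]))
    have ht2 : (r₁ - r₂).val ≠ 0 := by
      intro h
      exact hsub_ne' (Fin.ext (by simp [h]))
    have hlt1 : (r₂ - r₁).val < 2*n-1 := (r₂ - r₁).is_lt
    have hlt2 : (r₁ - r₂).val < 2*n-1 := (r₁ - r₂).is_lt
    have hsum : ((r₂ - r₁).val + (r₁ - r₂).val) % (2*n-1) = 0 := by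
      have h0 : (r₂ - r₁) + (r₁ - r₂) = 0 := by abel
      have := congrArg Fin.val h0
      rwa [Fin.add_def] at this
    have hsum' : (r₂ - r₁).val + (r₁ - r₂).val = 2*n-1 := by
      obtain ⟨q, hq⟩ := Nat.dvd_of_mod_eq_zero hsum
      match q, hq with
      | 0, hq => omega
      | 1, hq => omega
      | (q+2), hq =>
        have h2 : (2*n-1)*2 ≤ (2*n-1)*(q+2) := Nat.mul_le_mul_left _ (by omega)
        omega
    rcases le_or_gt (r₂ - r₁).val (n-1) with hc | hc
    · exact key r₁ r₂ (by rw [Finset.mem_Icc]; omega) j hj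
    · have : (r₁ - r₂).val ∈ Finset.Icc 1 (n-1) := by rw [Finset.mem_Icc]; omega
      exact fun heq => key r₂ r₁ this j hj heq.symm
end

section
/- Let k = n + 1 and suppose S_{ij} = {1,…,k} for all i ∈ {1,…,k}, j ∈ ℕ. Define a_{ij} = i + j − 1 (mod k, with representatives in {1,…,k}) for 1 ≤ j ≤ n, and a_{ij} = a_{in} for j ≥ n. Then this assignment satisfies conditions (2a), (2b), and (3) of the grid-filling problem. -/
lemma stmt4_modne (k r t₁ t₂ : ℕ) (h1 : t₁ < t₂) (h2 : t₂ - t₁ < k) :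
    (r + t₁) % k ≠ (r + t₂) % k := by
  intro h
  have hm : (r + t₁) ≡ (r + t₂) [MOD k] := h
  have hd := (Nat.modEq_iff_dvd' (by omega)).mp hm
  have hd' : k ∣ t₂ - t₁ := by
    have e : r + t₂ - (r + t₁) = t₂ - t₁ := by omega
    rwa [e] at hd
  have := Nat.le_of_dvd (by omega) hd'
  omega

/-- For k = n + 1 and S_{ij} = {1,…,k}, the cyclic assignment
a_{ij} = i + j − 1 (mod k, representatives in {1,…,k}) for 1 ≤ j ≤ n, extended by
a_{ij} = a_{in} for j ≥ n, satisfies (2a), (2b), (3). Row `i : Fin (n+1)` is row `i+1`. -/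
theorem stmt4 (n : ℕ) (hn : 1 ≤ n) (a : Fin (n + 1) → ℕ → ℕ)
    (ha : ∀ i : Fin (n + 1), ∀ j : ℕ, 1 ≤ j → j ≤ n →
      a i j = (i.val + j - 1) % (n + 1) + 1)
    (ha' : ∀ i : Fin (n + 1), ∀ j : ℕ, n ≤ j → a i j = a i n) :
    (∀ i, ∀ j : ℕ, 1 ≤ j → a i j ∈ Finset.Icc 1 (n + 1)) ∧
    (∀ i, ∀ j₁ j₂ : ℕ, 1 ≤ j₁ → j₁ < j₂ → j₂ ≤ n → a i j₁ ≠ a i j₂) ∧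
    (∀ i, ∀ j : ℕ, n ≤ j → ∀ j' : ℕ, 1 ≤ j' → j' ≤ n - 1 → a i j ≠ a i j') ∧
    (∀ r₁ r₂, r₁ ≠ r₂ → ∀ j : ℕ, 1 ≤ j →
      (Finset.Icc 1 j).image (a r₁) ≠ (Finset.Icc 1 j).image (a r₂)) := by
  -- membership characterization
  have memim : ∀ (r : Fin (n+1)) (m : ℕ), 1 ≤ m → m ≤ n → ∀ x : ℕ,
      (x ∈ (Finset.Icc 1 m).image (a r) ↔ ∃ s, s < m ∧ x = (r.val + s) % (n+1) + 1) := by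
    intro r m hm1 hm2 x
    simp only [Finset.mem_image, Finset.mem_Icc]
    constructor
    · rintro ⟨t, ⟨ht1, ht2⟩, rfl⟩
      refine ⟨t - 1, by omega, ?_⟩
      rw [ha r t ht1 (le_trans ht2 hm2)]
      congr 2
      omega
    · rintro ⟨s, hs, rfl⟩
      refine ⟨s + 1, ⟨by omega, by omega⟩, ?_⟩
      rw [ha r (s+1) (by omega) (by omega),
        show r.val + (s+1) - 1 = r.val + s from by omega]
  -- image over Icc 1 j collapses to Icc 1 (min j n)
  have imeq : ∀ (r : Fin (n+1)) (j : ℕ), 1 ≤ j →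
      (Finset.Icc 1 j).image (a r) = (Finset.Icc 1 (min j n)).image (a r) := by
    intro r j hj
    apply Finset.Subset.antisymm
    · intro x hx
      simp only [Finset.mem_image, Finset.mem_Icc] at hx ⊢
      obtain ⟨t, ⟨ht1, ht2⟩, rfl⟩ := hx
      by_cases h : t ≤ n
      · exact ⟨t, ⟨ht1, by omega⟩, rfl⟩
      · exact ⟨n, ⟨hn, by omega⟩, (ha' r t (by omega)).symm⟩
    · exact Finset.image_subset_image (Finset.Icc_subset_Icc_right (min_le_left _ _))
  refine ⟨?_, ?_, ?_, ?_⟩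
  · -- (1) range
    intro i j hj
    have key : ∀ t : ℕ, 1 ≤ t → t ≤ n → a i t ∈ Finset.Icc 1 (n + 1) := by
      intro t ht1 ht2
      rw [ha i t ht1 ht2, Finset.mem_Icc]
      have := Nat.mod_lt (i.val + t - 1) (show 0 < n + 1 by omega)
      omega
    by_cases h : j ≤ n
    · exact key j hj h
    · rw [ha' i j (by omega)]
      exact key n hn le_rfl
  · -- (2a) distinct in a row
    intro i j₁ j₂ h1 h12 h2
    rw [ha i j₁ h1 (by omega), ha i j₂ (by omega) h2,
      show i.val + j₁ - 1 = i.val + (j₁ - 1) from by omega,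
      show i.val + j₂ - 1 = i.val + (j₂ - 1) from by omega]
    intro h
    exact stmt4_modne (n+1) i.val (j₁-1) (j₂-1) (by omega) (by omega) (Nat.add_right_cancel h)
  · -- (2b)
    intro i j hj j' h1 h2
    rw [ha' i j hj, ha i n hn le_rfl, ha i j' h1 (by omega),
      show i.val + n - 1 = i.val + (n - 1) from by omega,
      show i.val + j' - 1 = i.val + (j' - 1) from by omega]
    intro h
    exact stmt4_modne (n+1) i.val (j'-1) (n-1) (by omega) (by omega)
      (Nat.add_right_cancel h.symm)
  · -- (3)
    intro r₁ r₂ hne j hj himg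
    rw [imeq r₁ j hj, imeq r₂ j hj] at himg
    set m := min j n with hm
    have hm1 : 1 ≤ m := by omega
    have hm2 : m ≤ n := by omega
    -- the first element of row r₁ is in the image of r₂
    have hx1 : (r₁.val + 0) % (n+1) + 1 ∈ (Finset.Icc 1 m).image (a r₂) := by
      rw [← himg, memim r₁ m hm1 hm2]
      exact ⟨0, by omega, rfl⟩
    rw [memim r₂ m hm1 hm2] at hx1
    obtain ⟨s, hs, hseq⟩ := hx1
    have h1 : (r₂.val + s) % (n+1) = (r₁.val + 0) % (n+1) := by omega
    rcases Nat.eq_zero_or_pos s with rfl | hspos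
    · -- s = 0 forces r₁ = r₂
      apply hne
      apply Fin.ext
      rw [Nat.mod_eq_of_lt (by omega : r₂.val + 0 < n + 1),
        Nat.mod_eq_of_lt (by omega : r₁.val + 0 < n + 1)] at h1
      omega
    · -- s ≥ 1: the "predecessor" of r₁ is in both images, contradiction
      have h2 : (r₂.val + (s-1)) % (n+1) = (r₁.val + n) % (n+1) := by
        calc (r₂.val + (s-1)) % (n+1)
            = (r₂.val + (s-1) + (n+1)) % (n+1) := (Nat.add_mod_right _ _).symm
          _ = (r₂.val + s + n) % (n+1) := by congr 1; omega
          _ = ((r₂.val + s) % (n+1) + n % (n+1)) % (n+1) := by rw [Nat.add_mod]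
          _ = ((r₁.val + 0) % (n+1) + n % (n+1)) % (n+1) := by rw [h1]
          _ = (r₁.val + 0 + n) % (n+1) := by rw [← Nat.add_mod]
          _ = (r₁.val + n) % (n+1) := by congr 1
      have hp : (r₁.val + n) % (n+1) + 1 ∈ (Finset.Icc 1 m).image (a r₁) := by
        rw [himg, memim r₂ m hm1 hm2]
        exact ⟨s - 1, by omega, by rw [h2]⟩
      rw [memim r₁ m hm1 hm2] at hp
      obtain ⟨s', hs', hs'eq⟩ := hp
      have heq : (r₁.val + s') % (n+1) = (r₁.val + n) % (n+1) := by omega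
      exact stmt4_modne (n+1) r₁.val s' n (by omega) (by omega) heq
end

section
/- Let n ≥ 2, k = 2n − 1, and identify values with residues modulo k. Suppose a_{i1} = i for i = 1,…,k and for j ≥ 2 each a_{ij} avoids the set {i+n, i+n+1, …, i+2n−2} (mod 2n−1). Then for any two distinct rows r₁ ≠ r₂ and any j ∈ ℕ, the prefix sets {a_{r₁1},…,a_{r₁j}} and {a_{r₂1},…,a_{r₂j}} are unequal, because for any distinct r₁, r₂ ∈ ℤ/(2n−1)ℤ, either r₁ ∈ {r₂+n,…,r₂+2n−2} or r₂ ∈ {r₁+n,…,r₁+2n−2} (mod 2n−1). -/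
/-- k = 2n − 1 construction, values in ℤ/(2n−1)ℤ. Rows are indexed by
residues; row r starts with r and for j ≥ 2 avoids the block {r+n, …, r+2n−2}.
Then any two distinct rows have unequal prefix sets at every length j. -/
theorem stmt11 (n : ℕ) (hn : 2 ≤ n)
    (a : ZMod (2 * n - 1) → ℕ → ZMod (2 * n - 1))
    (h1 : ∀ r, a r 1 = r)
    (h2 : ∀ r, ∀ j : ℕ, 2 ≤ j → ∀ t : ℕ, t ≤ n - 2 →
      a r j ≠ r + (n : ZMod (2 * n - 1)) + (t : ZMod (2 * n - 1))) :
    ∀ r₁ r₂ : ZMod (2 * n - 1), r₁ ≠ r₂ → ∀ j : ℕ, 1 ≤ j →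
      (Finset.Icc 1 j).image (a r₁) ≠ (Finset.Icc 1 j).image (a r₂) := by
  haveI : NeZero (2 * n - 1) := ⟨by omega⟩
  -- a helper: if s = r + n + t with t ≤ n-2 and s ≠ r, then s ∉ prefix image of row r
  have main : ∀ r s : ZMod (2 * n - 1), s ≠ r →
      (∃ t : ℕ, t ≤ n - 2 ∧ s = r + (n : ZMod (2 * n - 1)) + (t : ZMod (2 * n - 1))) →
      ∀ j : ℕ, 1 ≤ j →
      (Finset.Icc 1 j).image (a s) ≠ (Finset.Icc 1 j).image (a r) := by
    intro r s hsr ⟨t, ht, hst⟩ j hj heq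
    have hs : s ∈ (Finset.Icc 1 j).image (a s) := by
      apply Finset.mem_image.mpr
      exact ⟨1, Finset.mem_Icc.mpr ⟨le_refl 1, hj⟩, h1 s⟩
    rw [heq] at hs
    obtain ⟨i, hi, hai⟩ := Finset.mem_image.mp hs
    have hi' := Finset.mem_Icc.mp hi
    rcases eq_or_lt_of_le hi'.1 with h1' | h2'
    · rw [← h1', h1 r] at hai
      exact hsr hai.symm
    · exact h2 r i h2' t ht (hai.trans hst)
  intro r₁ r₂ hne j hj
  -- key dichotomy
  have key : (∃ t : ℕ, t ≤ n - 2 ∧ r₁ = r₂ + (n : ZMod (2 * n - 1)) + (t : ZMod (2 * n - 1))) ∨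
      (∃ t : ℕ, t ≤ n - 2 ∧ r₂ = r₁ + (n : ZMod (2 * n - 1)) + (t : ZMod (2 * n - 1))) := by
    set d := (r₁ - r₂).val with hd
    have hdlt : d < 2 * n - 1 := ZMod.val_lt _
    have hdne : d ≠ 0 := by
      simp only [hd, ne_eq, ZMod.val_eq_zero, sub_eq_zero]
      exact hne
    have hcast : ((d : ℕ) : ZMod (2 * n - 1)) = r₁ - r₂ := by
      simp [hd, ZMod.natCast_val, ZMod.cast_id]
    by_cases hc : n ≤ d
    · left
      refine ⟨d - n, by omega, ?_⟩
      have : ((n : ℕ) : ZMod (2 * n - 1)) + ((d - n : ℕ) : ZMod (2 * n - 1)) = r₁ - r₂ := by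
        rw [← Nat.cast_add, show n + (d - n) = d from by omega, hcast]
      rw [add_assoc, this]; ring
    · right
      refine ⟨n - 1 - d, by omega, ?_⟩
      have : ((n : ℕ) : ZMod (2 * n - 1)) + ((n - 1 - d : ℕ) : ZMod (2 * n - 1)) = r₂ - r₁ := by
        rw [← Nat.cast_add, show n + (n - 1 - d) = (2 * n - 1) - d from by omega,
          Nat.cast_sub (by omega), ZMod.natCast_self, hcast]
        ring
      rw [add_assoc, this]; ring
  rcases key with hk | hk
  · exact main r₂ r₁ hne hk j hj
  · exact fun h => main r₁ r₂ (Ne.symm hne) hk j hj h.symm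
end

section
/- Let k = n + 1 and a_{ij} = ((i + j − 2) mod (n+1)) + 1 for 1 ≤ i ≤ n+1 and 1 ≤ j ≤ n, extended by a_{ij} = a_{in} for j > n. Then for any two distinct rows i₁ ≠ i₂ and any j ∈ ℕ, the prefix sets {a_{i₁1},…,a_{i₁j}} and {a_{i₂1},…,a_{i₂j}} are distinct. -/
/-- The cyclic construction for k = n + 1, a_{ij} = ((i + j − 2) mod (n+1)) + 1
for 1 ≤ j ≤ n and a_{ij} = a_{in} for j > n, satisfies condition (3): distinct rows have
unequal prefix sets at every length. Row `i : Fin (n+1)` is row `i+1`, so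
a_{(i+1) j} = ((i.val + j − 1) mod (n+1)) + 1. -/
theorem stmt14 (n : ℕ) (hn : 1 ≤ n) (a : Fin (n + 1) → ℕ → ℕ)
    (ha : ∀ i : Fin (n + 1), ∀ j : ℕ, 1 ≤ j → j ≤ n →
      a i j = (i.val + j - 1) % (n + 1) + 1)
    (ha' : ∀ i : Fin (n + 1), ∀ j : ℕ, n < j → a i j = a i n) :
    ∀ i₁ i₂ : Fin (n + 1), i₁ ≠ i₂ → ∀ j : ℕ, 1 ≤ j →
      (Finset.Icc 1 j).image (a i₁) ≠ (Finset.Icc 1 j).image (a i₂) := by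
  -- membership characterization for prefix length m with 1 ≤ m ≤ n
  have mem_char : ∀ (i : Fin (n + 1)) (m : ℕ), 1 ≤ m → m ≤ n → ∀ x : ℕ,
      (x ∈ (Finset.Icc 1 m).image (a i) ↔ ∃ s, s < m ∧ x = (i.val + s) % (n + 1) + 1) := by
    intro i m h1 h2 x
    simp only [Finset.mem_image, Finset.mem_Icc]
    constructor
    · rintro ⟨t, ⟨ht1, ht2⟩, rfl⟩
      refine ⟨t - 1, by omega, ?_⟩
      rw [ha i t ht1 (ht2.trans h2)]
      have e : i.val + t - 1 = i.val + (t - 1) := by omega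
      rw [e]
    · rintro ⟨s, hs, rfl⟩
      refine ⟨s + 1, ⟨by omega, by omega⟩, ?_⟩
      rw [ha i (s + 1) (by omega) (by omega)]
      have e : i.val + (s + 1) - 1 = i.val + s := by omega
      rw [e]
  -- reduction: for j ≥ n the image equals the image at n
  have red : ∀ (i : Fin (n + 1)) (j : ℕ), n ≤ j →
      (Finset.Icc 1 j).image (a i) = (Finset.Icc 1 n).image (a i) := by
    intro i j hj
    apply Finset.Subset.antisymm
    · intro x hx
      simp only [Finset.mem_image, Finset.mem_Icc] at hx ⊢
      obtain ⟨t, ⟨ht1, ht2⟩, rfl⟩ := hx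
      rcases le_or_gt t n with h | h
      · exact ⟨t, ⟨ht1, h⟩, rfl⟩
      · exact ⟨n, ⟨hn, le_refl n⟩, (ha' i t h).symm⟩
    · exact Finset.image_subset_image (Finset.Icc_subset_Icc_right hj)
  intro i₁ i₂ hne j hj heq
  set m := min j n with hm
  have hm1 : 1 ≤ m := le_min hj hn
  have hmn : m ≤ n := min_le_right _ _
  have heq' : (Finset.Icc 1 m).image (a i₁) = (Finset.Icc 1 m).image (a i₂) := by
    rcases le_or_gt j n with h | h
    · rw [hm, min_eq_left h]; exact heq
    · rw [hm, min_eq_right h.le]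
      rw [red i₁ j h.le, red i₂ j h.le] at heq
      exact heq
  -- i₂'s first element is in i₁'s prefix set
  have h0 : (i₂.val + 0) % (n + 1) + 1 ∈ (Finset.Icc 1 m).image (a i₂) :=
    (mem_char i₂ m hm1 hmn _).2 ⟨0, by omega, rfl⟩
  rw [← heq'] at h0
  obtain ⟨s₁, hs₁, hx⟩ := (mem_char i₁ m hm1 hmn _).1 h0
  have hx' : (i₁.val + s₁) % (n + 1) = i₂.val := by
    have : (i₂.val + 0) % (n + 1) = i₂.val := by
      rw [Nat.add_zero]; exact Nat.mod_eq_of_lt i₂.isLt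
    omega
  rcases Nat.eq_zero_or_pos s₁ with rfl | hs₁pos
  · apply hne
    apply Fin.ext
    rw [Nat.add_zero, Nat.mod_eq_of_lt i₁.isLt] at hx'
    exact hx'
  · -- the element just before i₂'s start is in i₁'s prefix, hence in i₂'s: contradiction
    have h1 : (i₁.val + (s₁ - 1)) % (n + 1) + 1 ∈ (Finset.Icc 1 m).image (a i₁) :=
      (mem_char i₁ m hm1 hmn _).2 ⟨s₁ - 1, by omega, rfl⟩
    rw [heq'] at h1
    obtain ⟨s₂, hs₂, hy⟩ := (mem_char i₂ m hm1 hmn _).1 h1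
    have hy' : (i₂.val + s₂) % (n + 1) = (i₁.val + (s₁ - 1)) % (n + 1) := by omega
    have key : (i₁.val + (s₁ - 1)) % (n + 1) = (i₂.val + n) % (n + 1) := by
      have e1 : i₁.val + (s₁ - 1) + (n + 1) = (i₁.val + s₁) + n := by omega
      calc (i₁.val + (s₁ - 1)) % (n + 1)
          = (i₁.val + (s₁ - 1) + (n + 1)) % (n + 1) := (Nat.add_mod_right _ _).symm
        _ = ((i₁.val + s₁) + n) % (n + 1) := by rw [e1]
        _ = ((i₁.val + s₁) % (n + 1) + n) % (n + 1) := by rw [Nat.add_mod (i₁.val + s₁) n, Nat.mod_eq_of_lt (show n < n + 1 by omega)]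
        _ = (i₂.val + n) % (n + 1) := by rw [hx']
    have hmodeq : Nat.ModEq (n + 1) (i₂.val + s₂) (i₂.val + n) := by
      unfold Nat.ModEq; omega
    have : Nat.ModEq (n + 1) s₂ n := Nat.ModEq.add_left_cancel' i₂.val hmodeq
    have := this  -- s₂ % (n+1) = n % (n+1)
    unfold Nat.ModEq at this
    rw [Nat.mod_eq_of_lt (by omega : s₂ < n + 1), Nat.mod_eq_of_lt (by omega : n < n + 1)] at this
    omega
end
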